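/- Let Θ = [θmin, θmax], let Q : Θ → ℝ be integrable with 0 ≤ Q ≤ 1, and let P : Θ → ℝ satisfy the incentive-compatibility inequalities θ·Q(θ) − P(θ) ≥ θ·Q(r) − P(r) for all θ, r ∈ Θ, together with P(θmin) ≤ θmin·Q(θmin). Then for all r ∈ Θ: P(r) ≤ r·Q(r) − ∫_{θmin}^{r} Q(s) ds. (Payments of any incentive-compatible, individually rational scheme are bounded by the Myerson payment.) -/

import Mathlib

open intervalIntegral

/-- Any incentive-compatible payment scheme with individual rationality at the
lowest type is bounded above by the Myerson payment:
`P(r) ≤ r·Q(r) − ∫_{θmin}^r Q(s) ds` for all `r ∈ Θ`. -/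
theorem stmt10 (θmin θmax : ℝ) (hθ : θmin ≤ θmax) (Q P : ℝ → ℝ)
    (hint : IntervalIntegrable Q MeasureTheory.volume θmin θmax)
    (hQ0 : ∀ x ∈ Set.Icc θmin θmax, 0 ≤ Q x)
    (hQ1 : ∀ x ∈ Set.Icc θmin θmax, Q x ≤ 1)
    (hIC : ∀ θ ∈ Set.Icc θmin θmax, ∀ r ∈ Set.Icc θmin θmax,
      θ * Q r - P r ≤ θ * Q θ - P θ)
    (hIR : P θmin ≤ θmin * Q θmin) :
    ∀ r ∈ Set.Icc θmin θmax, P r ≤ r * Q r - ∫ s in θmin..r, Q s := by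
  intro r hr
  obtain ⟨hra, hrb⟩ := hr
  have hamem : θmin ∈ Set.Icc θmin θmax := ⟨le_rfl, hθ⟩
  have hrmem : r ∈ Set.Icc θmin θmax := ⟨hra, hrb⟩
  -- Q is monotone on the interval
  have hQmono : ∀ s ∈ Set.Icc θmin θmax, ∀ t ∈ Set.Icc θmin θmax, s ≤ t → Q s ≤ Q t := by
    intro s hs t ht hst
    rcases eq_or_lt_of_le hst with h | h
    · subst h; exact le_rfl
    · have h1 := hIC s hs t ht
      have h2 := hIC t ht s hs
      nlinarith
  have key : (∫ s in θmin..r, Q s) ≤ (r * Q r - P r) - (θmin * Q θmin - P θmin) := by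
    refine le_of_forall_pos_le_add ?_
    intro ε hε
    obtain ⟨n, hn⟩ := exists_nat_gt ((r - θmin) / ε)
    have hrθ : 0 ≤ r - θmin := by linarith
    have hn0 : 0 < (n : ℝ) := lt_of_le_of_lt (by positivity) hn
    set Δ : ℝ := (r - θmin) / n with hΔ
    have hΔ0 : 0 ≤ Δ := div_nonneg hrθ hn0.le
    have hΔε : Δ < ε := by
      rw [hΔ, div_lt_iff₀ hn0]
      have := (div_lt_iff₀ hε).1 hn
      linarith
    set x : ℕ → ℝ := fun i => θmin + i * Δ with hx
    have hx0 : x 0 = θmin := by simp [hx]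
    have hxn : x n = r := by
      simp only [hx, hΔ]
      field_simp
      ring
    have hxstep : ∀ i : ℕ, x (i + 1) - x i = Δ := by
      intro i
      simp only [hx]
      push_cast
      ring
    have hxle : ∀ i : ℕ, x i ≤ x (i + 1) := by
      intro i
      have := hxstep i
      linarith
    have hxmono : ∀ i j : ℕ, i ≤ j → x i ≤ x j := by
      intro i j hij
      simp only [hx]
      have : (i : ℝ) ≤ j := by exact_mod_cast hij
      nlinarith
    have hxmem : ∀ i ≤ n, x i ∈ Set.Icc θmin θmax := by
      intro i hi
      constructor
      · simp only [hx]
        have : 0 ≤ (i : ℝ) * Δ := mul_nonneg (Nat.cast_nonneg i) hΔ0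
        linarith
      · have := hxmono i n hi
        rw [hxn] at this
        linarith
    have hint' : ∀ k < n, IntervalIntegrable Q MeasureTheory.volume (x k) (x (k + 1)) := by
      intro k hk
      apply hint.mono_set
      rw [Set.uIcc_of_le (hxle k), Set.uIcc_of_le hθ]
      exact Set.Icc_subset_Icc (hxmem k hk.le).1 (hxmem (k + 1) hk).2
    have sumeq := intervalIntegral.sum_integral_adjacent_intervals hint'
    have piece : ∀ i ∈ Finset.range n,
        (∫ s in x i..x (i + 1), Q s) ≤ Δ * Q (x (i + 1)) := by
      intro i hi
      have hi' : i < n := Finset.mem_range.1 hi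
      have hsub : ∀ s ∈ Set.Icc (x i) (x (i + 1)), s ∈ Set.Icc θmin θmax := by
        intro s hs
        exact ⟨le_trans (hxmem i hi'.le).1 hs.1, le_trans hs.2 (hxmem (i + 1) hi').2⟩
      have hmono : ∀ s ∈ Set.Icc (x i) (x (i + 1)), Q s ≤ Q (x (i + 1)) := by
        intro s hs
        exact hQmono s (hsub s hs) (x (i + 1)) (hxmem (i + 1) hi') hs.2
      have := intervalIntegral.integral_mono_on (hxle i) (hint' i hi')
        intervalIntegrable_const hmono
      rwa [intervalIntegral.integral_const, smul_eq_mul, hxstep i] at this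
    have Udiff : ∀ i ∈ Finset.range n,
        Δ * Q (x i) ≤ (x (i + 1) * Q (x (i + 1)) - P (x (i + 1))) - (x i * Q (x i) - P (x i)) := by
      intro i hi
      have hi' : i < n := Finset.mem_range.1 hi
      have := hIC (x (i + 1)) (hxmem (i + 1) hi') (x i) (hxmem i hi'.le)
      have hstep : Δ * Q (x i) = x (i + 1) * Q (x i) - x i * Q (x i) := by
        rw [← hxstep i]; ring
      linarith
    calc (∫ s in θmin..r, Q s)
        = ∑ i ∈ Finset.range n, ∫ s in x i..x (i + 1), Q s := by
          rw [sumeq, hx0, hxn]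
      _ ≤ ∑ i ∈ Finset.range n, Δ * Q (x (i + 1)) := Finset.sum_le_sum piece
      _ = (∑ i ∈ Finset.range n, (Δ * Q (x (i + 1)) - Δ * Q (x i)))
            + ∑ i ∈ Finset.range n, Δ * Q (x i) := by
          rw [← Finset.sum_add_distrib]
          exact Finset.sum_congr rfl (fun i _ => by ring)
      _ = (Δ * Q (x n) - Δ * Q (x 0)) + ∑ i ∈ Finset.range n, Δ * Q (x i) := by
          rw [Finset.sum_range_sub (fun i => Δ * Q (x i))]
      _ ≤ ε + ∑ i ∈ Finset.range n,
            ((x (i + 1) * Q (x (i + 1)) - P (x (i + 1))) - (x i * Q (x i) - P (x i))) := by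
          have h1 : Δ * Q (x n) - Δ * Q (x 0) ≤ ε := by
            have hq1 : Q (x n) ≤ 1 := hQ1 _ (hxmem n le_rfl)
            have hq0 : 0 ≤ Q (x 0) := hQ0 _ (hxmem 0 (Nat.zero_le _))
            nlinarith
          have h2 := Finset.sum_le_sum Udiff
          linarith
      _ = ε + ((x n * Q (x n) - P (x n)) - (x 0 * Q (x 0) - P (x 0))) := by
          rw [Finset.sum_range_sub (fun i => x i * Q (x i) - P (x i))]
      _ = (r * Q r - P r) - (θmin * Q θmin - P θmin) + ε := by
          rw [hxn, hx0]; ring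
  linarith
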